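/- arXiv:2208.11616 — 3 statements merged into one kernel-verified Lean document; each statement's English description precedes it below -/
import Mathlib

section
/- If S ⊆ ℕ contains 0 and has positive Schnirelmann density, then S is an additive basis of finite order; that is, there exists h ≥ 1 such that every natural number is a sum of h elements of S. -/
set_option linter.unusedSectionVars false
open Finset
namespace Schn

def sumSet (A B : Set ℕ) : Set ℕ := {n | ∃ a ∈ A, ∃ b ∈ B, a + b = n}

instance sumSet.dec (A B : Set ℕ) [DecidablePred (· ∈ A)] [DecidablePred (· ∈ B)] :
    DecidablePred (· ∈ sumSet A B) := fun n =>
  decidable_of_iff (∃ a ∈ Finset.range (n+1), a ∈ A ∧ (n - a) ∈ B) (by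
    constructor
    · rintro ⟨a, ha, haA, hb⟩
      rw [Finset.mem_range] at ha
      exact ⟨a, haA, n - a, hb, by omega⟩
    · rintro ⟨a, haA, b, hbB, rfl⟩
      exact ⟨a, Finset.mem_range.2 (by omega), haA, by simpa using hbB⟩)

def cnt (A : Set ℕ) [DecidablePred (· ∈ A)] (n : ℕ) : ℕ := #{a ∈ Ioc 0 n | a ∈ A}

variable {A B : Set ℕ} [DecidablePred (· ∈ A)] [DecidablePred (· ∈ B)]

lemma density_mul_le_cnt (n : ℕ) : schnirelmannDensity A * n ≤ cnt A n :=
  schnirelmannDensity_mul_le_card_filter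

lemma cnt_le (n : ℕ) : cnt A n ≤ n := by
  simpa [cnt] using (card_filter_le (Ioc 0 n) (· ∈ A))

def predFn (A : Set ℕ) [DecidablePred (· ∈ A)] (m : ℕ) : ℕ :=
  ((Finset.range (m+1)).filter (fun a => a ∈ A)).sup id

lemma predFn_le (m : ℕ) : predFn A m ≤ m := by
  apply Finset.sup_le
  intro b hb
  simp only [mem_filter, mem_range] at hb
  show b ≤ m
  omega

lemma le_predFn {a m : ℕ} (ha : a ∈ A) (h : a ≤ m) : a ≤ predFn A m :=
  Finset.le_sup (f := id) (Finset.mem_filter.2 ⟨Finset.mem_range.2 (by omega), ha⟩)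

lemma predFn_mono {m m' : ℕ} (h : m ≤ m') : predFn A m ≤ predFn A m' := by
  apply Finset.sup_mono
  apply Finset.filter_subset_filter
  intro x hx
  simp only [Finset.mem_range] at hx ⊢
  omega

lemma predFn_mem (hA : 0 ∈ A) (m : ℕ) : predFn A m ∈ A := by
  obtain ⟨b, hb, he⟩ := Finset.exists_mem_eq_sup ((Finset.range (m+1)).filter (fun a => a ∈ A))
    ⟨0, by simp [hA]⟩ id
  rw [predFn, he]
  exact (mem_filter.1 hb).2

lemma predFn_of_mem {m : ℕ} (hm : m ∈ A) : predFn A m = m :=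
  le_antisymm (predFn_le m) (le_predFn hm le_rfl)

lemma key_count (hA : 0 ∈ A) (hB : 0 ∈ B) (n : ℕ) :
    (cnt A n : ℝ) + schnirelmannDensity B * ((n : ℝ) - cnt A n) ≤ cnt (sumSet A B) n := by
  set σB := schnirelmannDensity B with hσB
  have hσB0 : 0 ≤ σB := schnirelmannDensity_nonneg
  set X : Finset ℕ := (Ioc 0 n).filter (fun m => m ∈ A) with hX
  set T : Finset ℕ := (Ioc 0 n).filter (fun m => ¬ (m ∈ A)) with hT
  set I : Finset ℕ := T.image (predFn A) with hI
  set Y : Finset ℕ := T.filter (fun m => m - predFn A m ∈ B) with hYdef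
  -- step 1 : counts add up
  have hXT : #X + #T = n := by
    rw [hX, hT, Finset.card_filter_add_card_filter_not]
    simp
  have hXcnt : #X = cnt A n := rfl
  -- step 2 : X ∪ Y lands in the sumset
  have hXY : #X + #Y ≤ cnt (sumSet A B) n := by
    have hdisj : Disjoint X Y := by
      rw [Finset.disjoint_left]
      intro m hm hm'
      exact ((Finset.mem_filter.1 (Finset.filter_subset _ _ hm')).2 : ¬ _)
        (Finset.mem_filter.1 hm).2
    have hsub : X ∪ Y ⊆ (Ioc 0 n).filter (fun m => m ∈ sumSet A B) := by
      intro m hm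
      rcases Finset.mem_union.1 hm with hm | hm
      · rw [Finset.mem_filter] at hm ⊢
        exact ⟨hm.1, ⟨m, hm.2, 0, hB, by omega⟩⟩
      · rw [Finset.mem_filter] at hm
        obtain ⟨hmT, hmB⟩ := hm
        rw [hT, Finset.mem_filter] at hmT
        rw [Finset.mem_filter]
        refine ⟨hmT.1, ⟨predFn A m, predFn_mem hA m, m - predFn A m, hmB, ?_⟩⟩
        have := predFn_le (A := A) m
        omega
    calc #X + #Y = #(X ∪ Y) := (Finset.card_union_of_disjoint hdisj).symm
    _ ≤ _ := Finset.card_le_card hsub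
  -- step 3 : fiberwise decomposition
  have hmapT : ∀ m ∈ T, predFn A m ∈ I := fun m hm => Finset.mem_image_of_mem _ hm
  have hTfib : #T = ∑ a ∈ I, #(T.filter (fun m => predFn A m = a)) :=
    Finset.card_eq_sum_card_fiberwise hmapT
  have hYfib : #Y = ∑ a ∈ I, #(Y.filter (fun m => predFn A m = a)) :=
    Finset.card_eq_sum_card_fiberwise (fun m hm => hmapT m (Finset.filter_subset _ _ hm))
  -- step 4 : per-fiber estimate
  have hfiber : ∀ a ∈ I, σB * #(T.filter (fun m => predFn A m = a)) ≤
      #(Y.filter (fun m => predFn A m = a)) := by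
    intro a haI
    set F : Finset ℕ := T.filter (fun m => predFn A m = a) with hF
    have hFne : F.Nonempty := by
      obtain ⟨m, hm, hma⟩ := Finset.mem_image.1 haI
      exact ⟨m, Finset.mem_filter.2 ⟨hm, hma⟩⟩
    obtain ⟨m₀, hm₀F, he⟩ := Finset.exists_mem_eq_sup F hFne id
    set e : ℕ := F.sup id with hedef
    have hm₀ := Finset.mem_filter.1 hm₀F
    have hm₀T := Finset.mem_filter.1 hm₀.1
    have hm₀Ioc := Finset.mem_Ioc.1 hm₀T.1
    have haA : a ∈ A := hm₀.2 ▸ predFn_mem hA m₀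
    have hem₀ : e = m₀ := he
    -- the fiber is an interval
    have hFeq : F = Ioc a e := by
      ext m'
      constructor
      · intro hm'
        have hm'' := Finset.mem_filter.1 hm'
        have hm'T := Finset.mem_filter.1 hm''.1
        rw [Finset.mem_Ioc]
        constructor
        · have h1 : predFn A m' ≤ m' := predFn_le m'
          have h2 : predFn A m' ≠ m' := fun h => hm'T.2 (h ▸ predFn_mem hA m')
          rw [← hm''.2]
          omega
        · exact Finset.le_sup (f := id) hm'
      · intro hm'
        rw [Finset.mem_Ioc] at hm'
        have hm'm₀ : m' ≤ m₀ := by omega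
        have hpm' : predFn A m' = a := by
          have h1 : a ≤ predFn A m' := le_predFn haA (by omega)
          have h2 : predFn A m' ≤ predFn A m₀ := predFn_mono hm'm₀
          rw [hm₀.2] at h2
          omega
        have hm'A : ¬ (m' ∈ A) := fun h => by
          rw [predFn_of_mem h] at hpm'
          omega
        refine Finset.mem_filter.2 ⟨Finset.mem_filter.2 ⟨Finset.mem_Ioc.2 ⟨by omega, ?_⟩, hm'A⟩, hpm'⟩
        omega
    have hYF : Y.filter (fun m => predFn A m = a) = F.filter (fun m => m - a ∈ B) := by
      ext m
      simp only [hYdef, hF, Finset.mem_filter]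
      constructor
      · rintro ⟨⟨hmT, hmB⟩, hpa⟩
        exact ⟨⟨hmT, hpa⟩, hpa ▸ hmB⟩
      · rintro ⟨⟨hmT, hpa⟩, hmB⟩
        exact ⟨⟨hmT, hpa ▸ hmB⟩, hpa⟩
    have hcard : #(F.filter (fun m => m - a ∈ B)) = cnt B (e - a) := by
      rw [hFeq, cnt]
      apply Finset.card_bij' (i := fun m _ => m - a) (j := fun b _ => b + a)
      · intro m hm
        simp only [Finset.mem_filter, Finset.mem_Ioc] at hm ⊢
        exact ⟨⟨by omega, by omega⟩, hm.2⟩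
      · intro b hb
        simp only [Finset.mem_filter, Finset.mem_Ioc] at hb ⊢
        constructor
        · constructor <;> omega
        · simpa [Nat.add_sub_cancel] using hb.2
      · intro m hm
        simp only [Finset.mem_filter, Finset.mem_Ioc] at hm
        omega
      · intro b hb
        omega
    have hcardF : #F = e - a := by rw [hFeq, Nat.card_Ioc]
    rw [hYF, hcard, hcardF]
    have := density_mul_le_cnt (A := B) (e - a)
    exact this
  -- step 5 : sum the fiber estimates
  have hsum : σB * (#T : ℝ) ≤ #Y := by
    rw [hTfib, hYfib]
    push_cast
    rw [Finset.mul_sum]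
    exact Finset.sum_le_sum hfiber
  -- step 6 : combine
  have hcast : ((n : ℝ) - cnt A n) = #T := by
    have h' : cnt A n + #T = n := hXcnt ▸ hXT
    have h'' := congrArg (fun k : ℕ => (k : ℝ)) h'
    push_cast at h''
    linarith
  rw [hcast]
  calc (cnt A n : ℝ) + σB * #T ≤ (cnt A n : ℝ) + #Y := by linarith
  _ = ((#X + #Y : ℕ) : ℝ) := by rw [hXcnt]; push_cast; ring
  _ ≤ _ := by exact_mod_cast hXY

lemma density_sumSet (hA : 0 ∈ A) (hB : 0 ∈ B) :
    schnirelmannDensity A + schnirelmannDensity B -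
      schnirelmannDensity A * schnirelmannDensity B ≤ schnirelmannDensity (sumSet A B) := by
  rw [le_schnirelmannDensity_iff]
  intro n hn
  have hkey := key_count hA hB n
  have hA' := density_mul_le_cnt (A := A) n
  have hB1 : schnirelmannDensity B ≤ 1 := schnirelmannDensity_le_one
  have hB0 : (0:ℝ) ≤ schnirelmannDensity B := schnirelmannDensity_nonneg
  have hcle : (cnt A n : ℝ) ≤ n := by exact_mod_cast cnt_le (A := A) n
  have hnpos : (0:ℝ) < n := by exact_mod_cast hn
  rw [le_div_iff₀ hnpos]
  have hfact : (0:ℝ) ≤ (1 - schnirelmannDensity B) * ((cnt A n : ℝ) - schnirelmannDensity A * n) :=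
    mul_nonneg (by linarith) (by linarith)
  have : ((#{a ∈ Ioc 0 n | a ∈ sumSet A B} : ℕ) : ℝ) = (cnt (sumSet A B) n : ℝ) := rfl
  rw [this]
  nlinarith [hkey]

lemma covering (hA : 0 ∈ A) (hB : 0 ∈ B)
    (h : 1 ≤ schnirelmannDensity A + schnirelmannDensity B) (n : ℕ) : n ∈ sumSet A B := by
  by_contra hn
  have hnA : n ∉ A := fun h' => hn ⟨n, h', 0, hB, by omega⟩
  have hnB : n ∉ B := fun h' => hn ⟨0, hA, n, h', by omega⟩
  have hn0 : n ≠ 0 := fun h' => hn ⟨0, hA, 0, hB, by omega⟩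
  set X : Finset ℕ := (Ioc 0 n).filter (fun m => m ∈ A) with hX
  set Y : Finset ℕ := ((Ioc 0 n).filter (fun m => m ∈ B)).image (fun b => n - b) with hY
  have hYcard : #Y = cnt B n := by
    have h' : #Y = #((Ioc 0 n).filter (fun m => m ∈ B)) := Finset.card_image_of_injOn (by
      intro b hb b' hb' hbb
      simp only [Finset.mem_coe, Finset.mem_filter, Finset.mem_Ioc] at hb hb'
      dsimp only at hbb
      omega)
    exact h'
  have hdisj : Disjoint X Y := by
    rw [Finset.disjoint_left]
    intro a haX haY
    obtain ⟨b, hb, hab⟩ := Finset.mem_image.1 haY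
    simp only [Finset.mem_filter, Finset.mem_Ioc] at hb
    have haX' := Finset.mem_filter.1 haX
    have haIoc := Finset.mem_Ioc.1 haX'.1
    exact hn ⟨a, haX'.2, b, hb.2, by omega⟩
  have hsub : X ∪ Y ⊆ Ioc 0 (n - 1) := by
    intro a ha
    rcases Finset.mem_union.1 ha with ha | ha
    · have ha' := Finset.mem_filter.1 ha
      have haIoc := Finset.mem_Ioc.1 ha'.1
      have : a ≠ n := fun h' => hnA (h' ▸ ha'.2)
      rw [Finset.mem_Ioc]
      omega
    · obtain ⟨b, hb, hab⟩ := Finset.mem_image.1 ha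
      simp only [Finset.mem_filter, Finset.mem_Ioc] at hb
      have : b ≠ n := fun h' => hnB (h' ▸ hb.2)
      rw [Finset.mem_Ioc]
      omega
  have hle : cnt A n + cnt B n ≤ n - 1 := by
    calc cnt A n + cnt B n = #X + #Y := by rw [hYcard]; rfl
    _ = #(X ∪ Y) := (Finset.card_union_of_disjoint hdisj).symm
    _ ≤ #(Ioc 0 (n-1)) := Finset.card_le_card hsub
    _ = n - 1 := by rw [Nat.card_Ioc]; omega
  have hge : (n : ℝ) ≤ cnt A n + cnt B n := by
    have h1 := density_mul_le_cnt (A := A) n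
    have h2 := density_mul_le_cnt (A := B) n
    have hn' : (0:ℝ) ≤ n := by positivity
    nlinarith
  have hle' : (cnt A n : ℝ) + cnt B n ≤ (n : ℝ) - 1 := by
    have h1 : cnt A n + cnt B n + 1 ≤ n := by omega
    have h2 : ((cnt A n + cnt B n + 1 : ℕ) : ℝ) ≤ (n : ℝ) := Nat.cast_le.2 h1
    push_cast at h2
    linarith
  linarith

def iterSum (S : Set ℕ) : ℕ → Set ℕ
  | 0 => {0}
  | k+1 => sumSet (iterSum S k) S

instance iterSum.dec (S : Set ℕ) [DecidablePred (· ∈ S)] :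
    ∀ k, DecidablePred (· ∈ iterSum S k)
  | 0 => fun n => decidable_of_iff (n = 0) (by simp [iterSum])
  | k+1 => @sumSet.dec _ _ (iterSum.dec S k) _

variable {S : Set ℕ} [DecidablePred (· ∈ S)]

lemma zero_mem_iter (h0 : 0 ∈ S) : ∀ k, 0 ∈ iterSum S k
  | 0 => rfl
  | k+1 => ⟨0, zero_mem_iter h0 k, 0, h0, rfl⟩

lemma iter_density (h0 : 0 ∈ S) :
    ∀ k, 1 - (1 - schnirelmannDensity S) ^ k ≤ schnirelmannDensity (iterSum S k)
  | 0 => by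
    simpa using schnirelmannDensity_nonneg (A := iterSum S 0)
  | k+1 => by
    have IH := iter_density h0 k
    have hd1 : schnirelmannDensity S ≤ 1 := schnirelmannDensity_le_one
    have hd0 : (0:ℝ) ≤ schnirelmannDensity S := schnirelmannDensity_nonneg
    have hstep := density_sumSet (A := iterSum S k) (B := S) (zero_mem_iter h0 k) h0
    have hmul : (1 - schnirelmannDensity (iterSum S k)) * (1 - schnirelmannDensity S) ≤
        (1 - schnirelmannDensity S) ^ k * (1 - schnirelmannDensity S) :=
      mul_le_mul_of_nonneg_right (by linarith) (by linarith)
    rw [pow_succ]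
    show 1 - (1 - schnirelmannDensity S) ^ k * (1 - schnirelmannDensity S) ≤
      schnirelmannDensity (sumSet (iterSum S k) S)
    nlinarith

lemma iter_repr : ∀ k, ∀ n, n ∈ iterSum S k →
    ∃ f : Fin k → ℕ, (∀ i, f i ∈ S) ∧ ∑ i, f i = n
  | 0, n, hn => by
    have : n = 0 := hn
    exact ⟨fun i => 0, fun i => i.elim0, by simp [this]⟩
  | k+1, n, hn => by
    obtain ⟨m, hm, s, hs, rfl⟩ := hn
    obtain ⟨f, hf, hfs⟩ := iter_repr k m hm
    refine ⟨Fin.snoc f s, ?_, ?_⟩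
    · intro i
      refine Fin.lastCases ?_ (fun j => ?_) i
      · rw [Fin.snoc_last]; exact hs
      · rw [Fin.snoc_castSucc]; exact hf j
    · rw [Fin.sum_univ_castSucc]
      simp [Fin.snoc_last, Fin.snoc_castSucc, hfs]

lemma repr_add {h₁ h₂ x y : ℕ}
    (hx : ∃ f : Fin h₁ → ℕ, (∀ i, f i ∈ S) ∧ ∑ i, f i = x)
    (hy : ∃ g : Fin h₂ → ℕ, (∀ i, g i ∈ S) ∧ ∑ i, g i = y) :
    ∃ f : Fin (h₁ + h₂) → ℕ, (∀ i, f i ∈ S) ∧ ∑ i, f i = x + y := by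
  obtain ⟨f, hf, hfs⟩ := hx
  obtain ⟨g, hg, hgs⟩ := hy
  refine ⟨Fin.append f g, ?_, ?_⟩
  · intro i
    refine Fin.addCases (fun j => ?_) (fun j => ?_) i
    · rw [Fin.append_left]; exact hf j
    · rw [Fin.append_right]; exact hg j
  · rw [Fin.sum_univ_add]
    simp [Fin.append_left, Fin.append_right, hfs, hgs]

end Schn

/-- Schnirelmann's theorem: if `S ⊆ ℕ` contains `0` and has positive Schnirelmann density,
then `S` is an additive basis of finite order, i.e. there is `h ≥ 1` such that every natural
number is a sum of `h` elements of `S`. -/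
theorem schnirelmann_basis_of_pos_density
    (S : Set ℕ) [DecidablePred (· ∈ S)]
    (h0 : 0 ∈ S) (hσ : 0 < schnirelmannDensity S) :
    ∃ h : ℕ, 1 ≤ h ∧ ∀ n : ℕ, ∃ f : Fin h → ℕ, (∀ i, f i ∈ S) ∧ ∑ i, f i = n := by
  have hd1 : schnirelmannDensity S ≤ 1 := schnirelmannDensity_le_one
  obtain ⟨k, hk⟩ := exists_pow_lt_of_lt_one (by norm_num : (0:ℝ) < 1/2)
    (by linarith : 1 - schnirelmannDensity S < 1)
  have hk0 : k ≠ 0 := by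
    intro h
    rw [h, pow_zero] at hk
    norm_num at hk
  have hdk : (1:ℝ)/2 ≤ schnirelmannDensity (Schn.iterSum S k) := by
    have := Schn.iter_density h0 k
    linarith
  have hcov : ∀ n : ℕ, n ∈ Schn.sumSet (Schn.iterSum S k) (Schn.iterSum S k) :=
    Schn.covering (Schn.zero_mem_iter h0 k) (Schn.zero_mem_iter h0 k) (by linarith)
  refine ⟨k + k, by omega, fun n => ?_⟩
  obtain ⟨x, hx, y, hy, rfl⟩ := hcov n
  exact Schn.repr_add (Schn.iter_repr k x hx) (Schn.iter_repr k y hy)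
end

section
/- Let A be a commutative unital ℚ-algebra and T ⊆ ℚ a subset that is Diophantine over A, such that S = T ∩ ℕ has positive lower asymptotic density. Then ℚ (viewed as a subset of A) is Diophantine over A. -/
/-- A subset `S ⊆ A` is Diophantine over a commutative ring `A` if there are finitely many
polynomials `F₁,…,F_r` over `A` in one distinguished variable and `n` auxiliary variables
such that `a ∈ S` iff the system `F_j(a, y) = 0` has a solution `y ∈ Aⁿ`. -/
def IsDiophantineSet {A : Type*} [CommRing A] (S : Set A) : Prop :=
  ∃ (n r : ℕ) (F : Fin r → MvPolynomial (Option (Fin n)) A),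
    ∀ a : A, a ∈ S ↔ ∃ y : Fin n → A,
      ∀ j, MvPolynomial.eval (fun i : Option (Fin n) => i.elim a y) (F j) = 0

/-- The lower asymptotic density of a set of natural numbers. -/
noncomputable def lowerDensity (S : Set ℕ) : ℝ :=
  Filter.liminf (fun x : ℕ => (({n | n ∈ S ∧ 1 ≤ n ∧ n ≤ x}.ncard : ℝ) / x)) Filter.atTop

open Filter MvPolynomial

/-! ### Counting lemmas -/

private lemma aux_count (S : Set ℕ) (hS : 0 < lowerDensity S) :
    ∃ δ : ℝ, 0 < δ ∧ ∃ x₀ : ℕ, ∀ x : ℕ, x₀ ≤ x →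
      δ * x ≤ ({n | n ∈ S ∧ 1 ≤ n ∧ n ≤ x}.ncard : ℝ) := by
  refine ⟨lowerDensity S / 2, by linarith, ?_⟩
  by_contra hcon
  push_neg at hcon
  have hfreq : ∃ᶠ x : ℕ in atTop,
      (({n | n ∈ S ∧ 1 ≤ n ∧ n ≤ x}.ncard : ℝ)) / x ≤ lowerDensity S / 2 := by
    rw [frequently_atTop]
    intro a
    obtain ⟨x, hxa, hx⟩ := hcon a
    have hx0 : (0:ℝ) < x := by
      rcases Nat.eq_zero_or_pos x with rfl | h
      · rw [Nat.cast_zero, mul_zero] at hx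
        exact absurd hx (not_lt.mpr (Nat.cast_nonneg _))
      · exact_mod_cast h
    refine ⟨x, hxa, ?_⟩
    rw [div_le_iff₀ hx0]
    nlinarith [hx]
  have hb : IsBoundedUnder (· ≥ ·) atTop
      (fun x : ℕ => (({n | n ∈ S ∧ 1 ≤ n ∧ n ≤ x}.ncard : ℝ)) / x) :=
    ⟨0, by
      rw [Filter.eventually_map]
      exact Eventually.of_forall fun n => div_nonneg (Nat.cast_nonneg _) (Nat.cast_nonneg _)⟩
  have hle : lowerDensity S ≤ lowerDensity S / 2 :=
    liminf_le_of_frequently_le hfreq hb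
  linarith

private lemma aux_pigeonhole (S : Set ℕ) (hS : 0 < lowerDensity S) :
    ∃ K : ℕ, 0 < K ∧ ∀ t : ℕ, 0 < t →
      ∃ j a b : ℕ, 0 < j ∧ j ≤ K ∧ a ∈ S ∧ b ∈ S ∧ a = b + j * t := by
  classical
  obtain ⟨δ, hδ, x₀, hx₀⟩ := aux_count S hS
  obtain ⟨K0, hK0⟩ := exists_nat_ge (2 / δ)
  set K := K0 + 1 with hKdef
  have hKδ : 2 ≤ (K : ℝ) * δ := by
    have h1 : 2 / δ ≤ (K : ℝ) := by
      refine le_trans hK0 ?_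
      rw [hKdef]
      push_cast
      linarith
    have h2 := mul_le_mul_of_nonneg_right h1 hδ.le
    rwa [div_mul_cancel₀ _ (ne_of_gt hδ)] at h2
  refine ⟨K, by omega, ?_⟩
  intro t ht
  set x' := max x₀ (K * t) + 1 with hx'def
  set F := (Finset.Icc 1 x').filter (fun n => n ∈ S) with hFdef
  have hxx : δ * x' ≤ (F.card : ℝ) := by
    have h1 := hx₀ x' (le_trans (le_max_left _ _) (Nat.le_succ _))
    have hset : {n | n ∈ S ∧ 1 ≤ n ∧ n ≤ x'} = (F : Set ℕ) := by
      ext n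
      simp only [hFdef, Finset.coe_filter, Finset.mem_Icc, Set.mem_setOf_eq]
      tauto
    rwa [hset, Set.ncard_coe_finset] at h1
  have hmaps : ∀ p ∈ (Finset.Icc 1 K).sigma (fun i => F.image (fun s => s + i * t)),
      p.2 ∈ Finset.Icc 1 (x' + K * t) := by
    intro p hp
    rw [Finset.mem_sigma] at hp
    obtain ⟨s, hs, hsy⟩ := Finset.mem_image.mp hp.2
    have hi := Finset.mem_Icc.mp hp.1
    have hs' := Finset.mem_Icc.mp (Finset.mem_filter.mp hs).1
    rw [Finset.mem_Icc, ← hsy]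
    constructor
    · exact le_trans hs'.1 (Nat.le_add_right _ _)
    · exact add_le_add hs'.2 (Nat.mul_le_mul_right t hi.2)
  have hx'big : K * t < x' := by
    have := le_max_right x₀ (K * t)
    omega
  have hcard : (Finset.Icc 1 (x' + K * t)).card <
      ((Finset.Icc 1 K).sigma (fun i => F.image (fun s => s + i * t))).card := by
    rw [Finset.card_sigma]
    have himg : ∀ i : ℕ, (F.image (fun s => s + i * t)).card = F.card := fun i =>
      Finset.card_image_of_injective _ (add_left_injective (i * t))
    rw [Finset.sum_congr rfl (fun i _ => himg i), Finset.sum_const, Nat.card_Icc, Nat.card_Icc]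
    simp only [smul_eq_mul, Nat.add_sub_cancel]
    have hx'R : ((K * t : ℕ) : ℝ) < (x' : ℝ) := by exact_mod_cast hx'big
    have c1 : (K : ℝ) * (δ * x') ≤ (K : ℝ) * F.card :=
      mul_le_mul_of_nonneg_left hxx (Nat.cast_nonneg K)
    have c2 : 2 * (x' : ℝ) ≤ (K : ℝ) * δ * (x' : ℝ) :=
      mul_le_mul_of_nonneg_right hKδ (Nat.cast_nonneg x')
    have hreal : ((x' + K * t : ℕ) : ℝ) < ((K * F.card : ℕ) : ℝ) := by
      push_cast at hx'R c1 c2 ⊢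
      nlinarith
    exact_mod_cast hreal
  obtain ⟨p, hp, p', hp', hne, heq⟩ :=
    Finset.exists_ne_map_eq_of_card_lt_of_maps_to hcard hmaps
  rw [Finset.mem_sigma] at hp hp'
  obtain ⟨s, hs, hsy⟩ := Finset.mem_image.mp hp.2
  obtain ⟨s', hs', hsy'⟩ := Finset.mem_image.mp hp'.2
  have hi := Finset.mem_Icc.mp hp.1
  have hi' := Finset.mem_Icc.mp hp'.1
  have hsS : s ∈ S := (Finset.mem_filter.mp hs).2
  have hs'S : s' ∈ S := (Finset.mem_filter.mp hs').2
  have hii' : p.1 ≠ p'.1 := fun h => hne (Sigma.ext h (heq_of_eq heq))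
  have he : s + p.1 * t = s' + p'.1 * t := hsy.trans (heq.trans hsy'.symm)
  have key : ∀ u u' v v' : ℕ, 1 ≤ u → u' ≤ K → u < u' → v + u * t = v' + u' * t →
      v ∈ S → v' ∈ S →
      ∃ j a b : ℕ, 0 < j ∧ j ≤ K ∧ a ∈ S ∧ b ∈ S ∧ a = b + j * t := by
    intro u u' v v' hu1 hu2 huu hequ hv hv'
    refine ⟨u' - u, v, v', by omega, by omega, hv, hv', ?_⟩
    have h2 : u' = u + (u' - u) := by omega
    rw [h2, add_mul] at hequ
    have h3 : v + u * t = (v' + (u' - u) * t) + u * t := by linarith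
    exact Nat.add_right_cancel h3
  rcases lt_or_gt_of_ne hii' with hlt | hgt
  · exact key p.1 p'.1 s s' hi.1 hi'.2 hlt he hsS hs'S
  · exact key p'.1 p.1 s' s hi'.1 hi.2 hgt he.symm hs'S hsS

private lemma aux_sums (S : Set ℕ) (hS : 0 < lowerDensity S) :
    ∃ M : ℕ, 0 < M ∧ ∀ t : ℕ, ∃ f g : Fin M → ℕ,
      (∀ i, f i ∈ S) ∧ (∀ i, g i ∈ S) ∧ ∑ i, f i = (∑ i, g i) + M * t := by
  obtain ⟨K, hK, hpig⟩ := aux_pigeonhole S hS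
  refine ⟨Nat.factorial K, K.factorial_pos, fun t => ?_⟩
  rcases Nat.eq_zero_or_pos t with rfl | ht
  · obtain ⟨j, a, b, _, _, _, hb, _⟩ := hpig 1 one_pos
    exact ⟨fun _ => b, fun _ => b, fun _ => hb, fun _ => hb, by simp⟩
  · obtain ⟨j, a, b, hj0, hjK, ha, hb, hab⟩ := hpig t ht
    have hjd : j ∣ K.factorial := Nat.dvd_factorial hj0 hjK
    set c := K.factorial / j with hcdef
    have hcj : c * j = K.factorial := Nat.div_mul_cancel hjd
    have hcM : c ≤ K.factorial := Nat.div_le_self _ _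
    refine ⟨fun i => if (i : ℕ) < c then a else b, fun _ => b, ?_, fun _ => hb, ?_⟩
    · intro i
      dsimp only
      split
      · exact ha
      · exact hb
    · have hsplit : ∑ i : Fin (K.factorial), (if (i : ℕ) < c then a else b)
          = c * a + (K.factorial - c) * b := by
        rw [Fin.sum_univ_eq_sum_range (fun i => if i < c then a else b) (K.factorial)]
        rw [Finset.range_eq_Ico, ← Finset.sum_Ico_consecutive _ (Nat.zero_le c) hcM]
        have h1 : ∑ i ∈ Finset.Ico 0 c, (if i < c then a else b) = c * a := by
          rw [Finset.sum_congr rfl fun i hi => if_pos (Finset.mem_Ico.mp hi).2]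
          simp [mul_comm]
        have h2 : ∑ i ∈ Finset.Ico c (K.factorial), (if i < c then a else b) = (K.factorial - c) * b := by
          rw [Finset.sum_congr rfl fun i hi => if_neg (not_lt.mpr (Finset.mem_Ico.mp hi).1)]
          simp [Nat.card_Ico]
        rw [h1, h2]
      rw [hsplit, hab]
      have hgb : ∑ _i : Fin (K.factorial), b = K.factorial * b := by
        simp [mul_comm]
      rw [hgb]
      have h3 : c * (b + j * t) = c * b + (c * j) * t := by ring
      rw [h3, hcj]
      have h4 : (K.factorial - c) * b = K.factorial * b - c * b := Nat.sub_mul _ _ _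
      rw [h4]
      have h5 : c * b ≤ K.factorial * b := Nat.mul_le_mul_right b hcM
      generalize c * b = X at *
      generalize K.factorial * b = Y at *
      generalize K.factorial * t = Z at *
      omega

/-! ### Diophantine machinery -/

private lemma isDiophantineSet_of_finite_vars {A : Type*} [CommRing A] (S : Set A)
    (σ : Type) [Fintype σ] (r : ℕ) (Fs : Fin r → MvPolynomial (Option σ) A)
    (h : ∀ a : A, a ∈ S ↔ ∃ Y : σ → A,
      ∀ j, MvPolynomial.eval (fun i : Option σ => i.elim a Y) (Fs j) = 0) :
    IsDiophantineSet S := by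
  classical
  refine ⟨Fintype.card σ, r,
    fun j => rename (Option.map (Fintype.equivFin σ)) (Fs j), fun a => ?_⟩
  rw [h a]
  set e := Fintype.equivFin σ with hedef
  constructor
  · rintro ⟨Y, hY⟩
    refine ⟨Y ∘ e.symm, fun j => ?_⟩
    rw [eval_rename]
    have hc : (fun i : Option (Fin (Fintype.card σ)) => i.elim a (Y ∘ e.symm)) ∘ Option.map e
        = fun i : Option σ => i.elim a Y := by
      funext o
      cases o with
      | none => rfl
      | some s => simp
    rw [hc]
    exact hY j
  · rintro ⟨y, hy⟩
    refine ⟨y ∘ e, fun j => ?_⟩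
    have hj := hy j
    rw [eval_rename] at hj
    have hc : (fun i : Option (Fin (Fintype.card σ)) => i.elim a y) ∘ Option.map e
        = fun i : Option σ => i.elim a (y ∘ e) := by
      funext o
      cases o with
      | none => rfl
      | some s => rfl
    rwa [hc] at hj

private def valFn {M : ℕ} (f₀ g₀ f₁ g₁ f₂ g₂ : Fin M → ℕ) (j : Fin 3) (i : Fin M) (s : Fin 2) :
    ℕ :=
  if j = 0 then (if s = 0 then f₀ i else g₀ i)
  else if j = 1 then (if s = 0 then f₁ i else g₁ i)
  else (if s = 0 then f₂ i else g₂ i)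

private lemma valFn_00 {M : ℕ} (f₀ g₀ f₁ g₁ f₂ g₂ : Fin M → ℕ) (i : Fin M) :
    valFn f₀ g₀ f₁ g₁ f₂ g₂ 0 i 0 = f₀ i := by
  rw [valFn, if_pos rfl, if_pos rfl]

private lemma valFn_01 {M : ℕ} (f₀ g₀ f₁ g₁ f₂ g₂ : Fin M → ℕ) (i : Fin M) :
    valFn f₀ g₀ f₁ g₁ f₂ g₂ 0 i 1 = g₀ i := by
  rw [valFn, if_pos rfl, if_neg (by decide)]

private lemma valFn_10 {M : ℕ} (f₀ g₀ f₁ g₁ f₂ g₂ : Fin M → ℕ) (i : Fin M) :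
    valFn f₀ g₀ f₁ g₁ f₂ g₂ 1 i 0 = f₁ i := by
  rw [valFn, if_neg (by decide), if_pos rfl, if_pos rfl]

private lemma valFn_11 {M : ℕ} (f₀ g₀ f₁ g₁ f₂ g₂ : Fin M → ℕ) (i : Fin M) :
    valFn f₀ g₀ f₁ g₁ f₂ g₂ 1 i 1 = g₁ i := by
  rw [valFn, if_neg (by decide), if_pos rfl, if_neg (by decide)]

private lemma valFn_20 {M : ℕ} (f₀ g₀ f₁ g₁ f₂ g₂ : Fin M → ℕ) (i : Fin M) :
    valFn f₀ g₀ f₁ g₁ f₂ g₂ 2 i 0 = f₂ i := by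
  rw [valFn, if_neg (by decide), if_neg (by decide), if_pos rfl]

private lemma valFn_21 {M : ℕ} (f₀ g₀ f₁ g₁ f₂ g₂ : Fin M → ℕ) (i : Fin M) :
    valFn f₀ g₀ f₁ g₁ f₂ g₂ 2 i 1 = g₂ i := by
  rw [valFn, if_neg (by decide), if_neg (by decide), if_neg (by decide)]

private abbrev DVar (n₀ M : ℕ) : Type := (Fin 3 × Fin M × Fin 2 × Option (Fin n₀)) ⊕ Unit

private noncomputable def DPoly {A : Type*} [CommRing A] (n₀ M : ℕ) (j : Fin 3) :
    MvPolynomial (Option (DVar n₀ M)) A :=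
  ∑ i : Fin M, (X (some (Sum.inl (j, i, 0, none))) - X (some (Sum.inl (j, i, 1, none))))

private lemma eval_DPoly {A : Type*} [CommRing A] {n₀ M : ℕ} (j : Fin 3)
    (v : Option (DVar n₀ M) → A) :
    eval v (DPoly n₀ M j) =
      ∑ i : Fin M, (v (some (Sum.inl (j, i, 0, none))) - v (some (Sum.inl (j, i, 1, none)))) := by
  simp [DPoly]

private noncomputable def DSys {A : Type*} [CommRing A] {n₀ r₀ : ℕ} (M : ℕ)
    (F₀ : Fin r₀ → MvPolynomial (Option (Fin n₀)) A) :
    ((Fin 3 × Fin M × Fin 2 × Fin r₀) ⊕ Bool) → MvPolynomial (Option (DVar n₀ M)) A :=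
  Sum.elim
    (fun x => rename (fun o => some (Sum.inl (x.1, x.2.1, x.2.2.1, o))) (F₀ x.2.2.2))
    (fun b => cond b
      (DPoly n₀ M 2 * X (some (Sum.inr ())) - 1)
      (X none * DPoly n₀ M 2 - DPoly n₀ M 0 + DPoly n₀ M 1))

/-- Let `A` be a commutative unital `ℚ`-algebra and `T ⊆ ℚ` a subset that is Diophantine
over `A` (i.e. its image in `A` is a Diophantine subset of `A`), such that `S = T ∩ ℕ` has
positive lower asymptotic density. Then `ℚ` (viewed as a subset of `A`) is Diophantine
over `A`. -/
theorem rat_isDiophantine_of_diophantine_dense_subset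
    (A : Type*) [CommRing A] [Algebra ℚ A] (T : Set ℚ)
    (hT : IsDiophantineSet {x : A | ∃ q ∈ T, algebraMap ℚ A q = x})
    (hS : 0 < lowerDensity {n : ℕ | (n : ℚ) ∈ T}) :
    IsDiophantineSet (Set.range (algebraMap ℚ A)) := by
  classical
  obtain ⟨n₀, r₀, F₀, hF₀⟩ := hT
  obtain ⟨M, hM, hrep⟩ := aux_sums {n : ℕ | (n : ℚ) ∈ T} hS
  set ε := Fintype.equivFin ((Fin 3 × Fin M × Fin 2 × Fin r₀) ⊕ Bool) with hεdef
  refine isDiophantineSet_of_finite_vars _ (DVar n₀ M)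
      (Fintype.card ((Fin 3 × Fin M × Fin 2 × Fin r₀) ⊕ Bool))
      (DSys M F₀ ∘ ε.symm) (fun a => ?_)
  have hMQ : ((M : ℚ)) ≠ 0 := by exact_mod_cast hM.ne'
  constructor
  · -- forward direction
    rintro ⟨q, rfl⟩
    obtain ⟨f₀, g₀, hf₀, hg₀, hs₀⟩ := hrep q.num.toNat
    obtain ⟨f₁, g₁, hf₁, hg₁, hs₁⟩ := hrep (-q.num).toNat
    obtain ⟨f₂, g₂, hf₂, hg₂, hs₂⟩ := hrep q.den
    have hvalT : ∀ (j : Fin 3) (i : Fin M) (s : Fin 2),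
        ((valFn f₀ g₀ f₁ g₁ f₂ g₂ j i s : ℕ) : ℚ) ∈ T := by
      intro j i s
      fin_cases j <;> fin_cases s <;>
        simp only [valFn_00, valFn_01, valFn_10, valFn_11, valFn_20, valFn_21]
      exacts [hf₀ i, hg₀ i, hf₁ i, hg₁ i, hf₂ i, hg₂ i]
    have hcert : ∀ (j : Fin 3) (i : Fin M) (s : Fin 2),
        ∃ w : Fin n₀ → A, ∀ m, MvPolynomial.eval
          (fun o : Option (Fin n₀) =>
            o.elim (algebraMap ℚ A ((valFn f₀ g₀ f₁ g₁ f₂ g₂ j i s : ℕ) : ℚ)) w) (F₀ m) = 0 := by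
      intro j i s
      exact (hF₀ _).mp ⟨((valFn f₀ g₀ f₁ g₁ f₂ g₂ j i s : ℕ) : ℚ), hvalT j i s, rfl⟩
    choose W hW using hcert
    set Y : DVar n₀ M → A := fun v =>
      match v with
      | Sum.inl (j, i, s, none) => algebraMap ℚ A ((valFn f₀ g₀ f₁ g₁ f₂ g₂ j i s : ℕ) : ℚ)
      | Sum.inl (j, i, s, some k) => W j i s k
      | Sum.inr _ => algebraMap ℚ A ((M : ℚ) * (q.den : ℚ))⁻¹
      with hYdef
    set vv : Option (DVar n₀ M) → A :=
      fun i => i.elim (algebraMap ℚ A q) Y with hvvdef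
    have hDval : ∀ (j : Fin 3) (f g : Fin M → ℕ) (t : ℕ),
        (∀ i, valFn f₀ g₀ f₁ g₁ f₂ g₂ j i 0 = f i) →
        (∀ i, valFn f₀ g₀ f₁ g₁ f₂ g₂ j i 1 = g i) →
        (∑ i, f i) = (∑ i, g i) + M * t →
        MvPolynomial.eval vv (DPoly n₀ M j) = algebraMap ℚ A ((M * t : ℕ) : ℚ) := by
      intro j f g t h0 h1 hfg
      rw [eval_DPoly]
      have hterm : ∀ i : Fin M,
          vv (some (Sum.inl (j, i, 0, none))) - vv (some (Sum.inl (j, i, 1, none)))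
            = algebraMap ℚ A ((f i : ℚ) - (g i : ℚ)) := by
        intro i
        have e0 : vv (some (Sum.inl (j, i, 0, none)))
            = algebraMap ℚ A ((f i : ℕ) : ℚ) := by
          show Y (Sum.inl (j, i, 0, none)) = _
          rw [hYdef]
          dsimp only
          rw [h0 i]
        have e1 : vv (some (Sum.inl (j, i, 1, none)))
            = algebraMap ℚ A ((g i : ℕ) : ℚ) := by
          show Y (Sum.inl (j, i, 1, none)) = _
          rw [hYdef]
          dsimp only
          rw [h1 i]
        rw [e0, e1, map_sub]
      rw [Finset.sum_congr rfl (fun i _ => hterm i), ← map_sum]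
      congr 1
      rw [Finset.sum_sub_distrib]
      have h2 := congrArg (fun n : ℕ => (n : ℚ)) hfg
      push_cast at h2 ⊢
      linarith
    have hD0 : MvPolynomial.eval vv (DPoly n₀ M 0)
        = algebraMap ℚ A ((M * q.num.toNat : ℕ) : ℚ) :=
      hDval 0 f₀ g₀ _ (fun i => valFn_00 _ _ _ _ _ _ i) (fun i => valFn_01 _ _ _ _ _ _ i) hs₀
    have hD1 : MvPolynomial.eval vv (DPoly n₀ M 1)
        = algebraMap ℚ A ((M * (-q.num).toNat : ℕ) : ℚ) :=
      hDval 1 f₁ g₁ _ (fun i => valFn_10 _ _ _ _ _ _ i) (fun i => valFn_11 _ _ _ _ _ _ i) hs₁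
    have hD2 : MvPolynomial.eval vv (DPoly n₀ M 2)
        = algebraMap ℚ A ((M * q.den : ℕ) : ℚ) :=
      hDval 2 f₂ g₂ _ (fun i => valFn_20 _ _ _ _ _ _ i) (fun i => valFn_21 _ _ _ _ _ _ i) hs₂
    refine ⟨Y, fun jj => ?_⟩
    show MvPolynomial.eval vv (DSys M F₀ (ε.symm jj)) = 0
    generalize ε.symm jj = p
    rcases p with ⟨j, i, s, m⟩ | b
    · -- certificate equations
      show MvPolynomial.eval vv
        (rename (fun o => some (Sum.inl (j, i, s, o))) (F₀ m)) = 0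
      rw [eval_rename]
      have hcomp : vv ∘ (fun o : Option (Fin n₀) => some (Sum.inl (j, i, s, o)))
          = fun o : Option (Fin n₀) =>
              o.elim (algebraMap ℚ A ((valFn f₀ g₀ f₁ g₁ f₂ g₂ j i s : ℕ) : ℚ)) (W j i s) := by
        funext o
        cases o with
        | none => rfl
        | some k => rfl
      rw [hcomp]
      exact hW j i s m
    · rcases b with _ | _
      · -- main linear equation
        show MvPolynomial.eval vv
          (X none * DPoly n₀ M 2 - DPoly n₀ M 0 + DPoly n₀ M 1) = 0
        rw [map_add, map_sub, map_mul, eval_X, hD0, hD1, hD2]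
        have hvn : vv none = algebraMap ℚ A q := rfl
        rw [hvn, ← map_mul, ← map_sub, ← map_add]
        have hkey : q * ((M * q.den : ℕ) : ℚ) - ((M * q.num.toNat : ℕ) : ℚ)
            + ((M * (-q.num).toNat : ℕ) : ℚ) = 0 := by
          have hqd : q * (q.den : ℚ) = (q.num : ℚ) := Rat.mul_den_eq_num q
          have ht : ((q.num.toNat : ℚ)) - (((-q.num).toNat : ℚ)) = (q.num : ℚ) := by
            have hz : (q.num.toNat : ℤ) - ((-q.num).toNat : ℤ) = q.num := by omega
            exact_mod_cast hz
          push_cast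
          linear_combination (M : ℚ) * hqd - (M : ℚ) * ht
        rw [hkey, map_zero]
      · -- invertibility equation
        show MvPolynomial.eval vv
          (DPoly n₀ M 2 * X (some (Sum.inr ())) - 1) = 0
        rw [map_sub, map_mul, map_one, eval_X, hD2]
        have hvw : vv (some (Sum.inr ())) = algebraMap ℚ A ((M : ℚ) * (q.den : ℚ))⁻¹ := rfl
        rw [hvw, ← map_mul]
        have hden : ((q.den : ℚ)) ≠ 0 := by
          exact_mod_cast q.den_nz
        have hkey : ((M * q.den : ℕ) : ℚ) * ((M : ℚ) * (q.den : ℚ))⁻¹ = 1 := by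
          push_cast
          field_simp
        rw [hkey, map_one, sub_self]
  · -- backward direction
    rintro ⟨Y, hY⟩
    set vv : Option (DVar n₀ M) → A := fun i => i.elim a Y with hvvdef
    have hAll : ∀ p, MvPolynomial.eval vv (DSys M F₀ p) = 0 := by
      intro p
      have := hY (ε p)
      simpa only [Function.comp_apply, Equiv.symm_apply_apply] using this
    have hmem : ∀ (j : Fin 3) (i : Fin M) (s : Fin 2),
        ∃ qr, qr ∈ T ∧ algebraMap ℚ A qr = Y (Sum.inl (j, i, s, none)) := by
      intro j i s
      have h' : ∀ m, MvPolynomial.eval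
          (fun o : Option (Fin n₀) => o.elim (Y (Sum.inl (j, i, s, none)))
            (fun k => Y (Sum.inl (j, i, s, some k)))) (F₀ m) = 0 := by
        intro m
        have hm := hAll (Sum.inl (j, i, s, m))
        have hred : DSys M F₀ (Sum.inl (j, i, s, m))
            = rename (fun o => some (Sum.inl (j, i, s, o))) (F₀ m) := rfl
        rw [hred, eval_rename] at hm
        have hcomp : vv ∘ (fun o : Option (Fin n₀) => some (Sum.inl (j, i, s, o)))
            = fun o : Option (Fin n₀) => o.elim (Y (Sum.inl (j, i, s, none)))
                (fun k => Y (Sum.inl (j, i, s, some k))) := by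
          funext o
          cases o with
          | none => rfl
          | some k => rfl
        rwa [hcomp] at hm
      exact (hF₀ _).mpr ⟨_, h'⟩
    choose qv hqvT hqve using hmem
    set Q : Fin 3 → ℚ := fun j => ∑ i, (qv j i 0 - qv j i 1) with hQdef
    have hDj : ∀ j : Fin 3, MvPolynomial.eval vv (DPoly n₀ M j) = algebraMap ℚ A (Q j) := by
      intro j
      rw [eval_DPoly, hQdef]
      rw [map_sum]
      refine Finset.sum_congr rfl fun i _ => ?_
      show Y (Sum.inl (j, i, 0, none)) - Y (Sum.inl (j, i, 1, none)) = _
      rw [map_sub, hqve j i 0, hqve j i 1]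
    have E1 := hAll (Sum.inr false)
    have E2 := hAll (Sum.inr true)
    have hred1 : DSys (A := A) M F₀ (Sum.inr false)
        = X none * DPoly n₀ M 2 - DPoly n₀ M 0 + DPoly n₀ M 1 := rfl
    have hred2 : DSys (A := A) M F₀ (Sum.inr true)
        = DPoly n₀ M 2 * X (some (Sum.inr ())) - 1 := rfl
    rw [hred1, map_add, map_sub, map_mul, eval_X, hDj 0, hDj 1, hDj 2] at E1
    rw [hred2, map_sub, map_mul, map_one, eval_X, hDj 2] at E2
    have hvn : vv none = a := rfl
    rw [hvn] at E1
    have hvw : vv (some (Sum.inr ())) = Y (Sum.inr ()) := rfl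
    rw [hvw] at E2
    by_cases hQ2 : Q 2 = 0
    · rw [hQ2, map_zero, zero_mul] at E2
      have h01 : (0 : A) = 1 := by linear_combination E2
      have : Subsingleton A := subsingleton_of_zero_eq_one h01
      exact ⟨0, Subsingleton.elim _ _⟩
    · refine ⟨(Q 0 - Q 1) / Q 2, ?_⟩
      have hinv : algebraMap ℚ A (Q 2) * Y (Sum.inr ()) = 1 := by linear_combination E2
      have hE1' : algebraMap ℚ A (Q 0) - algebraMap ℚ A (Q 1)
          = a * algebraMap ℚ A (Q 2) := by linear_combination -E1
      calc algebraMap ℚ A ((Q 0 - Q 1) / Q 2)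
          = algebraMap ℚ A ((Q 0 - Q 1) / Q 2) * (algebraMap ℚ A (Q 2) * Y (Sum.inr ())) := by
            rw [hinv, mul_one]
        _ = algebraMap ℚ A ((Q 0 - Q 1) / Q 2 * Q 2) * Y (Sum.inr ()) := by
            rw [map_mul]; ring
        _ = algebraMap ℚ A (Q 0 - Q 1) * Y (Sum.inr ()) := by
            rw [div_mul_cancel₀ _ hQ2]
        _ = (a * algebraMap ℚ A (Q 2)) * Y (Sum.inr ()) := by
            rw [map_sub, hE1']
        _ = a * (algebraMap ℚ A (Q 2) * Y (Sum.inr ())) := by ring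
        _ = a := by rw [hinv, mul_one]
end

section
/- Let π : X → ℙ¹ be an elliptic surface over ℂ such that X contains only finitely many rational curves, with Weierstrass equation y² = x³ + A(t)x + B(t), A, B ∈ ℂ[t]. Then for every non-constant rational function f ∈ ℂ(z), the elliptic curve E_f over ℂ(z) defined by y² = x³ + A(f(z))x + B(f(z)) has Mordell–Weil rank 0, i.e., E_f(ℂ(z)) is finite. -/
open Polynomial

/-- A rational function is constant if it lies in the image of `RatFunc.C`. -/
def RatFuncIsConstant (f : RatFunc ℂ) : Prop := ∃ c : ℂ, f = RatFunc.C c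

/-- The image in the Weierstrass surface `{(t,x,y) : y² = x³ + A(t)x + B(t)}` of the rational
map `ℙ¹ ⤏ X`, `s ↦ (t(s), u(s), v(s))`: the set of values at the points of `ℂ` where none of
the three rational functions has a pole. -/
def imageCurve (t u v : RatFunc ℂ) : Set (ℂ × ℂ × ℂ) :=
  {P | ∃ s : ℂ, t.denom.eval s ≠ 0 ∧ u.denom.eval s ≠ 0 ∧ v.denom.eval s ≠ 0 ∧
    P = (RatFunc.eval (RingHom.id ℂ) s t, RatFunc.eval (RingHom.id ℂ) s u,
          RatFunc.eval (RingHom.id ℂ) s v)}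

/-- `C` is a rational curve on the Weierstrass surface `y² = x³ + A(t)x + B(t)`: it is the
image of a non-constant rational map `ℙ¹ ⤏ X` given by a triple of rational functions
`(t(s), u(s), v(s))` satisfying the Weierstrass equation. -/
def IsRationalCurveOn (A B : Polynomial ℂ) (C : Set (ℂ × ℂ × ℂ)) : Prop :=
  ∃ t u v : RatFunc ℂ,
    ¬ (RatFuncIsConstant t ∧ RatFuncIsConstant u ∧ RatFuncIsConstant v) ∧
    v ^ 2 = u ^ 3 + Polynomial.aeval t A * u + Polynomial.aeval t B ∧
    C = imageCurve t u v

namespace MWAux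

noncomputable def evalAt (s : ℂ) (w : RatFunc ℂ) : ℂ := RatFunc.eval (RingHom.id ℂ) s w

def Good (s : ℂ) (w : RatFunc ℂ) : Prop := w.denom.eval s ≠ 0

lemma eval₂_id_eq (p : Polynomial ℂ) (s : ℂ) : Polynomial.eval₂ (RingHom.id ℂ) s p = p.eval s := rfl

lemma good_C (s : ℂ) (c : ℂ) : Good s (RatFunc.C c) := by
  simp [Good, RatFunc.denom_C]

lemma good_dvd {s : ℂ} {p q : Polynomial ℂ} (h : p ∣ q) (hq : q.eval s ≠ 0) : p.eval s ≠ 0 := by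
  intro h0
  exact hq (Polynomial.eval_eq_zero_of_dvd_of_eval_eq_zero h h0)

lemma good_add {s : ℂ} {x y : RatFunc ℂ} (hx : Good s x) (hy : Good s y) : Good s (x + y) := by
  have := RatFunc.denom_add_dvd x y
  refine good_dvd this ?_
  simp [Polynomial.eval_mul]
  exact ⟨hx, hy⟩

lemma good_mul {s : ℂ} {x y : RatFunc ℂ} (hx : Good s x) (hy : Good s y) : Good s (x * y) := by
  refine good_dvd (RatFunc.denom_mul_dvd x y) ?_
  simp [Polynomial.eval_mul]
  exact ⟨hx, hy⟩

lemma evalAt_add {s : ℂ} {x y : RatFunc ℂ} (hx : Good s x) (hy : Good s y) :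
    evalAt s (x + y) = evalAt s x + evalAt s y :=
  RatFunc.eval_add (f := RingHom.id ℂ) (a := s) hx hy

lemma evalAt_mul {s : ℂ} {x y : RatFunc ℂ} (hx : Good s x) (hy : Good s y) :
    evalAt s (x * y) = evalAt s x * evalAt s y :=
  RatFunc.eval_mul (f := RingHom.id ℂ) (a := s) hx hy

lemma good_pow {s : ℂ} {x : RatFunc ℂ} (hx : Good s x) (n : ℕ) :
    Good s (x ^ n) ∧ evalAt s (x ^ n) = (evalAt s x) ^ n := by
  induction n with
  | zero =>
    constructor
    · simp only [pow_zero]; simp [Good]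
    · simp only [pow_zero]; simp [evalAt]
  | succ n ih =>
    rw [pow_succ, pow_succ]
    exact ⟨good_mul ih.1 hx, by rw [evalAt_mul ih.1 hx, ih.2]⟩

lemma evalAt_C (s : ℂ) (c : ℂ) : evalAt s (RatFunc.C c) = c := by
  simp [evalAt]


lemma evalAt_zero (s : ℂ) : evalAt s 0 = 0 := by simp [evalAt]

/-- Univariate: evaluation of `p(g)` at a good point. -/
lemma aeval_good {s : ℂ} {g : RatFunc ℂ} (hg : Good s g) (p : Polynomial ℂ) :
    Good s (Polynomial.aeval g p) ∧ evalAt s (Polynomial.aeval g p) = p.eval (evalAt s g) := by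
  induction p using Polynomial.induction_on' with
  | add p q hp hq =>
    rw [map_add, Polynomial.eval_add]
    exact ⟨good_add hp.1 hq.1, by rw [evalAt_add hp.1 hq.1, hp.2, hq.2]⟩
  | monomial n c =>
    rw [Polynomial.aeval_monomial, Polynomial.eval_monomial]
    have hC : Good s (algebraMap ℂ (RatFunc ℂ) c) := by
      rw [RatFunc.algebraMap_eq_C]; exact good_C s c
    refine ⟨good_mul hC (good_pow hg n).1, ?_⟩
    rw [evalAt_mul hC (good_pow hg n).1, (good_pow hg n).2]
    rw [RatFunc.algebraMap_eq_C, evalAt_C]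

/-- Bivariate: evaluation of `Q(g, u)` at a good point. -/
lemma biv_good {s : ℂ} {g u : RatFunc ℂ} (hg : Good s g) (hu : Good s u)
    (Q : Polynomial (Polynomial ℂ)) :
    Good s (Polynomial.eval₂ ((Polynomial.aeval g).toRingHom : Polynomial ℂ →+* RatFunc ℂ) u Q) ∧
    evalAt s (Polynomial.eval₂ ((Polynomial.aeval g).toRingHom : Polynomial ℂ →+* RatFunc ℂ) u Q)
      = Polynomial.eval₂ (Polynomial.evalRingHom (evalAt s g)) (evalAt s u) Q := by
  induction Q using Polynomial.induction_on' with
  | add p q hp hq =>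
    rw [Polynomial.eval₂_add, Polynomial.eval₂_add]
    exact ⟨good_add hp.1 hq.1, by rw [evalAt_add hp.1 hq.1, hp.2, hq.2]⟩
  | monomial n c =>
    rw [Polynomial.eval₂_monomial, Polynomial.eval₂_monomial]
    have h1 := aeval_good hg c
    refine ⟨good_mul h1.1 (good_pow hu n).1, ?_⟩
    show evalAt s ((Polynomial.aeval g) c * u ^ n) = _
    rw [evalAt_mul h1.1 (good_pow hu n).1, (good_pow hu n).2, h1.2]
    rfl

lemma evalAt_ne_zero {s : ℂ} {w : RatFunc ℂ} (hnum : w.num.eval s ≠ 0)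
    (hden : w.denom.eval s ≠ 0) : evalAt s w ≠ 0 := by
  unfold evalAt RatFunc.eval
  exact div_ne_zero hnum hden

/-- A nonconstant rational function kills no nonzero polynomial. -/
lemma aeval_ne_zero_of_nonconst {f : RatFunc ℂ} (hf : ¬ RatFuncIsConstant f) :
    ∀ p : Polynomial ℂ, p ≠ 0 → Polynomial.aeval f p ≠ 0 := by
  suffices H : ∀ n : ℕ, ∀ p : Polynomial ℂ, p.natDegree = n → p ≠ 0 → Polynomial.aeval f p ≠ 0 by
    exact fun p => H p.natDegree p rfl
  intro n
  induction n using Nat.strong_induction_on with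
  | _ n ih =>
    intro p hdeg hp hev
    rcases Nat.eq_zero_or_pos n with h0 | hpos
    · -- constant polynomial
      subst h0
      obtain ⟨c, rfl⟩ := Polynomial.natDegree_eq_zero.mp hdeg
      rw [Polynomial.aeval_C] at hev
      have hc : c ≠ 0 := fun h => hp (by simp [h])
      exact hc (map_eq_zero_iff _ (RingHom.injective _) |>.mp hev)
    · have hdeg' : 0 < p.degree := by
        rw [Polynomial.degree_eq_natDegree hp, hdeg]
        exact_mod_cast hpos
      obtain ⟨r, hr⟩ := Complex.exists_root hdeg'
      obtain ⟨q, rfl⟩ := Polynomial.dvd_iff_isRoot.mpr hr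
      have hq : q ≠ 0 := fun h => hp (by simp [h])
      have hXr : (Polynomial.X - Polynomial.C r) ≠ (0 : Polynomial ℂ) := Polynomial.X_sub_C_ne_zero r
      rw [map_mul] at hev
      have hfr : Polynomial.aeval f (Polynomial.X - Polynomial.C r) ≠ 0 := by
        rw [map_sub, Polynomial.aeval_X, Polynomial.aeval_C, RatFunc.algebraMap_eq_C, sub_ne_zero]
        exact fun h => hf ⟨r, h⟩
      have hqev : Polynomial.aeval f q = 0 := by
        rcases mul_eq_zero.mp hev with h | h
        · exact absurd h hfr
        · exact h
      have hlt : q.natDegree < n := by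
        have h2 := Polynomial.natDegree_mul hXr hq
        rw [Polynomial.natDegree_X_sub_C] at h2
        rw [h2] at hdeg
        omega
      exact ih _ hlt q rfl hq hqev


theorem exists_Q2 {f : RatFunc ℂ} (hf : ¬ RatFuncIsConstant f) (u₀ : RatFunc ℂ) :
    ∃ Q2 : Polynomial (Polynomial ℂ), Q2 ≠ 0 ∧
      Polynomial.eval₂ ((Polynomial.aeval f).toRingHom : Polynomial ℂ →+* RatFunc ℂ) u₀ Q2 = 0 := by
  classical
  have hinj : Function.Injective (Polynomial.aeval f : Polynomial ℂ →ₐ[ℂ] RatFunc ℂ) := by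
    rw [injective_iff_map_eq_zero]
    intro p hp
    by_contra h
    exact aeval_ne_zero_of_nonconst hf p h hp
  let φ : RatFunc ℂ →ₐ[ℂ] RatFunc ℂ := IsFractionRing.liftAlgHom hinj
  have hφcomp : ∀ p : Polynomial ℂ,
      φ (algebraMap (Polynomial ℂ) (RatFunc ℂ) p) = Polynomial.aeval f p := fun p => by
    simp only [φ, IsFractionRing.liftAlgHom_apply]
    exact IsFractionRing.lift_algebraMap hinj p
  set L : IntermediateField ℂ (RatFunc ℂ) := φ.fieldRange with hL
  have hfmem : f ∈ L := by
    have h1 : φ (algebraMap (Polynomial ℂ) (RatFunc ℂ) Polynomial.X) = f := by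
      rw [hφcomp, Polynomial.aeval_X]
    exact ⟨_, h1⟩
  set fL : L := ⟨f, hfmem⟩ with hfL
  -- `aeval RatFunc.X p = algebraMap p`
  have haX : ∀ p : Polynomial ℂ,
      Polynomial.aeval (RatFunc.X : RatFunc ℂ) p = algebraMap (Polynomial ℂ) (RatFunc ℂ) p := by
    intro p
    induction p using Polynomial.induction_on' with
    | add p q hp hq => rw [map_add, map_add, hp, hq]
    | monomial n c =>
      rw [Polynomial.aeval_monomial, ← Polynomial.C_mul_X_pow_eq_monomial, map_mul, map_pow,
        RatFunc.algebraMap_C, RatFunc.algebraMap_X, RatFunc.algebraMap_eq_C]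
  -- `RatFunc.X` is integral over `L`
  have hz : IsIntegral L (RatFunc.X : RatFunc ℂ) := by
    rw [← isAlgebraic_iff_isIntegral]
    refine ⟨(f.num.map (algebraMap ℂ L)) - Polynomial.C fL * (f.denom.map (algebraMap ℂ L)),
      ?_, ?_⟩
    · intro h0
      have hsub : f.num.map (algebraMap ℂ L) = Polynomial.C fL * f.denom.map (algebraMap ℂ L) :=
        sub_eq_zero.mp h0
      set j := f.denom.natDegree with hj
      have hbj : f.denom.coeff j ≠ 0 := by
        rw [hj, ← Polynomial.leadingCoeff]
        exact Polynomial.leadingCoeff_ne_zero.mpr (RatFunc.denom_ne_zero f)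
      have hco := congrArg (fun p => p.coeff j) hsub
      simp only [Polynomial.coeff_map, Polynomial.coeff_C_mul] at hco
      have hcoK := congrArg (algebraMap L (RatFunc ℂ)) hco
      simp only [map_mul, ← IsScalarTower.algebraMap_apply ℂ L (RatFunc ℂ)] at hcoK
      have hfLK : algebraMap L (RatFunc ℂ) fL = f := rfl
      rw [hfLK] at hcoK
      -- hcoK : algebraMap ℂ (RatFunc ℂ) (f.num.coeff j) = f * algebraMap ℂ (RatFunc ℂ) (f.denom.coeff j)
      apply hf
      refine ⟨f.num.coeff j / f.denom.coeff j, ?_⟩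
      have hbj' : algebraMap ℂ (RatFunc ℂ) (f.denom.coeff j) ≠ 0 := fun h =>
        hbj ((map_eq_zero_iff _ (RingHom.injective _)).mp h)
      rw [RatFunc.algebraMap_eq_C] at hcoK hbj'
      rw [map_div₀, eq_div_iff hbj', hcoK]
    · rw [map_sub, map_mul, Polynomial.aeval_C,
        Polynomial.aeval_map_algebraMap, Polynomial.aeval_map_algebraMap, haX, haX]
      have hfLK : algebraMap L (RatFunc ℂ) fL = f := rfl
      rw [hfLK, sub_eq_zero]
      have hd : algebraMap (Polynomial ℂ) (RatFunc ℂ) f.denom ≠ 0 :=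
        RatFunc.algebraMap_ne_zero (RatFunc.denom_ne_zero f)
      exact (div_eq_iff hd).mp (RatFunc.num_div_denom f)
  -- every `algebraMap p` is integral over `L`
  have hmemL : ∀ c : ℂ, algebraMap ℂ (RatFunc ℂ) c ∈ L := fun c =>
    ⟨algebraMap ℂ (RatFunc ℂ) c, φ.commutes c⟩
  have hLint : ∀ x : RatFunc ℂ, x ∈ L → IsIntegral L x := by
    intro x hx
    have := isIntegral_algebraMap (R := L) (A := RatFunc ℂ) (x := ⟨x, hx⟩)
    simpa using this
  have hint : ∀ p : Polynomial ℂ, IsIntegral L (algebraMap (Polynomial ℂ) (RatFunc ℂ) p) := by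
    intro p
    induction p using Polynomial.induction_on' with
    | add p q hp hq => rw [map_add]; exact hp.add hq
    | monomial n c =>
      rw [← Polynomial.C_mul_X_pow_eq_monomial, map_mul, map_pow, RatFunc.algebraMap_X]
      refine (hLint _ ?_).mul (hz.pow n)
      rw [RatFunc.algebraMap_C, ← RatFunc.algebraMap_eq_C]
      exact hmemL c
  -- `u₀` is integral, hence algebraic, over `L`
  have hu₀ : IsIntegral L u₀ := by
    rw [← RatFunc.num_div_denom u₀, div_eq_mul_inv]
    exact (hint _).mul (hint _).inv
  obtain ⟨QL, hQL0, hQLev⟩ := hu₀.isAlgebraic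
  -- pull the coefficients of `QL` back through `φ`
  let cf : ℕ → RatFunc ℂ := fun i => Function.invFun φ ((QL.coeff i : RatFunc ℂ))
  have hc : ∀ i, φ (cf i) = (QL.coeff i : RatFunc ℂ) := by
    intro i
    have hex : ∃ x, φ x = (QL.coeff i : RatFunc ℂ) := (QL.coeff i).2
    exact Function.invFun_eq hex
  set QF : Polynomial (RatFunc ℂ) :=
    ∑ i ∈ Finset.range (QL.natDegree + 1), Polynomial.C (cf i) * Polynomial.X ^ i with hQF
  have hQFcoeff : ∀ k, QF.coeff k = if k < QL.natDegree + 1 then cf k else 0 := by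
    intro k
    rw [hQF, Polynomial.finset_sum_coeff]
    simp only [Polynomial.coeff_C_mul, Polynomial.coeff_X_pow, mul_ite, mul_one, mul_zero]
    rw [Finset.sum_ite_eq (Finset.range (QL.natDegree + 1)) k cf]
    simp [Finset.mem_range]
  have hmap : QF.map (φ : RatFunc ℂ →+* RatFunc ℂ) = QL.map (algebraMap L (RatFunc ℂ)) := by
    ext k
    rw [Polynomial.coeff_map, Polynomial.coeff_map, hQFcoeff k]
    by_cases hk : k < QL.natDegree + 1
    · rw [if_pos hk]
      exact hc k
    · rw [if_neg hk, map_zero]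
      rw [Polynomial.coeff_eq_zero_of_natDegree_lt (by omega), map_zero]
  have haminj : Function.Injective (algebraMap L (RatFunc ℂ)) := RingHom.injective _
  have hQF0 : QF ≠ 0 := by
    intro h0
    apply hQL0
    have := hmap
    rw [h0, Polynomial.map_zero] at this
    exact (Polynomial.map_eq_zero_iff haminj).mp this.symm
  have hQFev : Polynomial.eval₂ (φ : RatFunc ℂ →+* RatFunc ℂ) u₀ QF = 0 := by
    rw [Polynomial.eval₂_eq_eval_map, hmap, Polynomial.eval_map, ← Polynomial.aeval_def]
    exact hQLev
  -- clear denominators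
  refine ⟨IsLocalization.integerNormalization (nonZeroDivisors (Polynomial ℂ)) QF, ?_, ?_⟩
  · intro h0
    exact hQF0 ((IsFractionRing.integerNormalization_eq_zero_iff).mp h0)
  · have h := IsLocalization.integerNormalization_eval₂_eq_zero
      (M := nonZeroDivisors (Polynomial ℂ)) (φ : RatFunc ℂ →+* RatFunc ℂ) QF hQFev
    have hcomp : (φ : RatFunc ℂ →+* RatFunc ℂ).comp (algebraMap (Polynomial ℂ) (RatFunc ℂ))
        = ((Polynomial.aeval f).toRingHom : Polynomial ℂ →+* RatFunc ℂ) := by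
      exact RingHom.ext fun p => hφcomp p
    rw [hcomp] at h
    exact h


end MWAux

open MWAux in
/-- Let `π : X → ℙ¹` be the elliptic surface over `ℂ` with Weierstrass equation
`y² = x³ + A(t)x + B(t)` such that `X` contains only finitely many rational curves. Then for
every non-constant rational function `f ∈ ℂ(z)`, the elliptic curve `E_f` over `ℂ(z)` defined
by `y² = x³ + A(f(z))x + B(f(z))` has Mordell–Weil rank `0`; indeed `E_f(ℂ(z))` is finite. -/
theorem mordell_weil_finite_of_finitely_many_rational_curves
    (A B : Polynomial ℂ) (hΔ : 4 * A ^ 3 + 27 * B ^ 2 ≠ 0)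
    (hfin : {C : Set (ℂ × ℂ × ℂ) | IsRationalCurveOn A B C}.Finite)
    (f : RatFunc ℂ) (hf : ¬ RatFuncIsConstant f) :
    ({P : RatFunc ℂ × RatFunc ℂ |
        P.2 ^ 2 = P.1 ^ 3 + Polynomial.aeval f A * P.1 + Polynomial.aeval f B}).Finite := by
  classical
  set S : Set (RatFunc ℂ × RatFunc ℂ) := {P : RatFunc ℂ × RatFunc ℂ |
      P.2 ^ 2 = P.1 ^ 3 + Polynomial.aeval f A * P.1 + Polynomial.aeval f B} with hS
  -- finiteness of the solutions with a fixed image curve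
  have key : ∀ C : Set (ℂ × ℂ × ℂ), ({P ∈ S | imageCurve f P.1 P.2 = C}).Finite := by
    intro C
    rcases Set.eq_empty_or_nonempty {P ∈ S | imageCurve f P.1 P.2 = C} with hE | hNE
    · rw [hE]; exact Set.finite_empty
    obtain ⟨⟨u₀, v₀⟩, hP₀S, hP₀C⟩ := hNE
    obtain ⟨Q2, hQ20, hQ2ev⟩ := exists_Q2 hf u₀
    have hPK0 : Q2.map ((Polynomial.aeval f).toRingHom : Polynomial ℂ →+* RatFunc ℂ) ≠ 0 := by
      refine (Polynomial.map_ne_zero_iff ?_).mpr hQ20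
      rw [injective_iff_map_eq_zero]
      intro p hp; by_contra h; exact aeval_ne_zero_of_nonconst hf p h hp
    have hU : ({x : RatFunc ℂ |
        (Q2.map ((Polynomial.aeval f).toRingHom : Polynomial ℂ →+* RatFunc ℂ)).IsRoot x}).Finite :=
      Polynomial.finite_setOf_isRoot hPK0
    -- the first coordinate of any solution with this image curve is a root
    have hroot : ∀ P ∈ {P ∈ S | imageCurve f P.1 P.2 = C},
        (Q2.map ((Polynomial.aeval f).toRingHom : Polynomial ℂ →+* RatFunc ℂ)).IsRoot P.1 := by
      rintro ⟨u, v⟩ ⟨huv, hCuv⟩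
      have hWzero :
          Polynomial.eval₂ ((Polynomial.aeval f).toRingHom : Polynomial ℂ →+* RatFunc ℂ) u Q2
            = 0 := by
        by_contra hW0
        set W := Polynomial.eval₂ ((Polynomial.aeval f).toRingHom : Polynomial ℂ →+* RatFunc ℂ)
          u Q2 with hW
        have hbad : ({s : ℂ | f.denom.IsRoot s} ∪ {s | u.denom.IsRoot s} ∪ {s | v.denom.IsRoot s}
            ∪ {s | W.denom.IsRoot s} ∪ {s | W.num.IsRoot s}).Finite :=
          ((((Polynomial.finite_setOf_isRoot (RatFunc.denom_ne_zero f)).union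
            (Polynomial.finite_setOf_isRoot (RatFunc.denom_ne_zero u))).union
            (Polynomial.finite_setOf_isRoot (RatFunc.denom_ne_zero v))).union
            (Polynomial.finite_setOf_isRoot (RatFunc.denom_ne_zero W))).union
            (Polynomial.finite_setOf_isRoot (RatFunc.num_ne_zero hW0))
        obtain ⟨s, hs⟩ := hbad.infinite_compl.nonempty
        simp only [Set.mem_compl_iff, Set.mem_union, not_or, Set.mem_setOf_eq] at hs
        obtain ⟨⟨⟨⟨hsf, hsu⟩, hsv⟩, hsWd⟩, hsWn⟩ := hs
        have hpt : (evalAt s f, evalAt s u, evalAt s v) ∈ imageCurve f u v :=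
          ⟨s, hsf, hsu, hsv, rfl⟩
        have hcc : imageCurve f u v = imageCurve f u₀ v₀ := by rw [hCuv, hP₀C]
        rw [hcc] at hpt
        obtain ⟨s', hs'f, hs'u₀, hs'v₀, heq⟩ := hpt
        have heqf : evalAt s f = evalAt s' f := congrArg Prod.fst heq
        have hequ : evalAt s u = evalAt s' u₀ := congrArg (fun P => P.2.1) heq
        have h0 := (biv_good (g := f) (u := u₀) hs'f hs'u₀ Q2).2
        rw [hQ2ev, evalAt_zero] at h0
        have h1 := (biv_good (g := f) (u := u) hsf hsu Q2).2
        rw [heqf, hequ, ← h0] at h1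
        exact evalAt_ne_zero hsWn hsWd h1
      show Polynomial.eval _ _ = 0
      rw [Polynomial.eval_map]
      exact hWzero
    -- second coordinates: at most two square roots
    have hV : ∀ u : RatFunc ℂ, ({v : RatFunc ℂ |
        v ^ 2 = u ^ 3 + Polynomial.aeval f A * u + Polynomial.aeval f B}).Finite := by
      intro u
      rcases Set.eq_empty_or_nonempty {v : RatFunc ℂ |
          v ^ 2 = u ^ 3 + Polynomial.aeval f A * u + Polynomial.aeval f B} with h | ⟨v₁, hv₁⟩
      · rw [h]; exact Set.finite_empty
      · refine ((Set.finite_singleton (-v₁)).insert v₁).subset ?_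
        intro v hv
        have hsq : v ^ 2 = v₁ ^ 2 := by
          rw [Set.mem_setOf_eq] at hv hv₁
          rw [hv, hv₁]
        have h2 : (v - v₁) * (v + v₁) = 0 := by ring_nf; linear_combination hsq
        rcases mul_eq_zero.mp h2 with h | h
        · exact Set.mem_insert_iff.mpr (Or.inl (sub_eq_zero.mp h))
        · exact Set.mem_insert_iff.mpr (Or.inr (by
            simp only [Set.mem_singleton_iff]
            exact eq_neg_of_add_eq_zero_left h))
    refine ((hU.prod (hU.biUnion (fun u _ => hV u))).subset ?_)
    rintro ⟨u, v⟩ hP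
    exact ⟨hroot _ hP, Set.mem_biUnion (hroot _ hP) hP.1⟩
  -- every solution gives a rational curve on the surface
  have hsub : S ⊆ ⋃ C ∈ {C | IsRationalCurveOn A B C}, {P ∈ S | imageCurve f P.1 P.2 = C} := by
    intro P hP
    exact Set.mem_biUnion ⟨f, P.1, P.2, fun h => hf h.1, hP, rfl⟩ ⟨hP, rfl⟩
  exact (Set.Finite.biUnion hfin (fun C _ => key C)).subset hsub
end
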